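/- arXiv:1108.2714 — 3 statements merged into one kernel-verified Lean document; each statement's English description precedes it below -/
import Mathlib

section
/- Let p ≥ 1 and k ≥ 1 be integers, and let Q be an integer polynomial in m variables that is an integer linear combination of the polynomials (x_1 - a_1)^{i_1}···(x_m - a_m)^{i_m}·N^ℓ over tuples with i_1 + ··· + i_m + ℓ ≥ k, where p divides N. If r_1,...,r_m are integers with a_i ≡ r_i (mod p) for all i, and |Q(r_1,...,r_m)| < p^k, then Q(r_1,...,r_m) = 0. -/
/-- If `Q` is an integer linear combination of the polynomials
`(x_1-a_1)^{i_1}···(x_m-a_m)^{i_m}·N^ℓ` over tuples with `i_1+···+i_m+ℓ ≥ k`,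
`p ∣ N`, `a_i ≡ r_i (mod p)` for all `i`, and `|Q(r)| < p^k`, then `Q(r) = 0`. -/
theorem stmt2 (m : ℕ) (p N : ℤ) (k : ℕ) (hp : 0 < p) (hk : 0 < k) (hpN : p ∣ N)
    (a r : Fin m → ℤ) (hcong : ∀ i, a i ≡ r i [ZMOD p])
    (Q : MvPolynomial (Fin m) ℤ)
    (hQ : Q ∈ Submodule.span ℤ
      {P : MvPolynomial (Fin m) ℤ | ∃ (e : Fin m → ℕ) (ℓ : ℕ),
        k ≤ (∑ i, e i) + ℓ ∧
        P = (∏ i, (MvPolynomial.X i - MvPolynomial.C (a i)) ^ e i) *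
              MvPolynomial.C N ^ ℓ})
    (hsmall : |MvPolynomial.eval r Q| < p ^ k) :
    MvPolynomial.eval r Q = 0 := by
  have hdvd : ∀ P ∈ Submodule.span ℤ
      {P : MvPolynomial (Fin m) ℤ | ∃ (e : Fin m → ℕ) (ℓ : ℕ),
        k ≤ (∑ i, e i) + ℓ ∧
        P = (∏ i, (MvPolynomial.X i - MvPolynomial.C (a i)) ^ e i) *
              MvPolynomial.C N ^ ℓ},
      (p ^ k : ℤ) ∣ MvPolynomial.eval r P := by
    intro P hP
    refine Submodule.span_induction ?_ ?_ ?_ ?_ hP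
    · rintro P ⟨e, ℓ, hkle, rfl⟩
      simp only [map_mul, map_prod, map_pow, map_sub, MvPolynomial.eval_X,
        MvPolynomial.eval_C]
      have h1 : ∀ i : Fin m, (p : ℤ) ^ e i ∣ (r i - a i) ^ e i := fun i =>
        pow_dvd_pow_of_dvd (Int.ModEq.dvd (hcong i)) _
      have h2 : (p : ℤ) ^ (∑ i, e i) ∣ ∏ i, (r i - a i) ^ e i := by
        rw [← Finset.prod_pow_eq_pow_sum]
        exact Finset.prod_dvd_prod_of_dvd _ _ (fun i _ => h1 i)
      have h3 : (p : ℤ) ^ ℓ ∣ N ^ ℓ := pow_dvd_pow_of_dvd hpN _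
      calc (p : ℤ) ^ k ∣ p ^ ((∑ i, e i) + ℓ) := pow_dvd_pow _ hkle
        _ = p ^ (∑ i, e i) * p ^ ℓ := pow_add _ _ _
        _ ∣ (∏ i, (r i - a i) ^ e i) * N ^ ℓ := mul_dvd_mul h2 h3
    · simp
    · intro x y _ _ hx hy; simpa [map_add] using dvd_add hx hy
    · intro c x _ hx; simpa using Dvd.dvd.mul_left hx _
  have := hdvd Q hQ
  exact Int.eq_zero_of_abs_lt_dvd this hsmall
end

section
/- For nonnegative integers t and m, the sum over all tuples (i_1,...,i_m) of nonnegative integers with i_1 + ··· + i_m ≤ t of i_1 + ··· + i_m equals C(t+m, m)·t·m/(m+1). -/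
open Finset Finset.Nat

lemma adt_succ (k n : ℕ) :
    Finset.Nat.antidiagonalTuple (k + 1) n =
      (Finset.HasAntidiagonal.antidiagonal n).biUnion
        (fun p => (Finset.Nat.antidiagonalTuple k p.2).map
          ⟨Fin.cons p.1, Fin.cons_right_injective _⟩) := by
  ext x
  simp only [mem_antidiagonalTuple, mem_biUnion, Finset.HasAntidiagonal.mem_antidiagonal, mem_map,
    Function.Embedding.coeFn_mk, Prod.exists]
  constructor
  · rintro rfl
    refine ⟨x 0, ∑ i, Fin.tail x i, ?_, Fin.tail x, rfl, Fin.cons_self_tail x⟩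
    rw [Fin.sum_univ_succ]
    rfl
  · rintro ⟨a, b, hab, y, hy, rfl⟩
    rw [Fin.sum_cons, hy, hab]

lemma hockey (j : ℕ) : ∀ n, ∑ s ∈ Finset.range (n + 1), (s + j).choose j
    = (n + j + 1).choose (j + 1) := by
  intro n
  induction n with
  | zero => simp
  | succ n ih =>
    rw [Finset.sum_range_succ, ih]
    have h1 : n + 1 + j + 1 = (n + j + 1) + 1 := by omega
    have h2 : n + 1 + j = n + j + 1 := by omega
    rw [h1, h2, Nat.choose_succ_succ (n + j + 1) j]
    simp only [Nat.succ_eq_add_one]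
    omega

lemma adt_card (j : ℕ) : ∀ n, (Finset.Nat.antidiagonalTuple (j + 1) n).card
    = (n + j).choose j := by
  induction j with
  | zero => intro n; simp
  | succ j ih =>
    intro n
    rw [adt_succ]
    refine Eq.trans (Finset.card_biUnion ?_) ?_
    · intro a ha b hb hab
      rw [Function.onFun, Finset.disjoint_left]
      rintro x hx1 hx2
      simp only [mem_map, Function.Embedding.coeFn_mk] at hx1 hx2
      obtain ⟨y, hy, rfl⟩ := hx1
      obtain ⟨z, hz, hzx⟩ := hx2
      apply hab
      have h0 : b.1 = a.1 := by
        have := congrArg (fun f => f 0) hzx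
        simpa using this
      rw [Finset.mem_coe, Finset.HasAntidiagonal.mem_antidiagonal] at ha hb
      have h2 : a.2 = b.2 := by omega
      exact Prod.ext h0.symm h2
    · simp only [Finset.card_map, ih]
      rw [Finset.Nat.sum_antidiagonal_eq_sum_range_succ_mk]
      have := Finset.sum_range_reflect (fun s => (s + j).choose j) (n + 1)
      simp only [Nat.add_sub_cancel] at this
      rw [this, hockey]
      congr 1

lemma key_sum (j : ℕ) : ∀ t, (j + 2) * ∑ s ∈ Finset.range (t + 1), (s + j).choose j * s
    = (t + (j + 1)).choose (j + 1) * t * (j + 1) := by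
  intro t
  induction t with
  | zero => simp
  | succ t ih =>
    rw [Finset.sum_range_succ, Nat.mul_add, ih]
    have pascal : (t + 1 + (j + 1)).choose (j + 1)
        = (t + j + 1).choose j + (t + j + 1).choose (j + 1) := by
      have h : t + 1 + (j + 1) = (t + j + 1) + 1 := by omega
      rw [h, Nat.choose_succ_succ (t + j + 1) j]
    have hsub : t + j + 1 - j = t + 1 := by omega
    have key2 : (t + 1) * (t + j + 1).choose j = (j + 1) * (t + j + 1).choose (j + 1) := by
      have h := Nat.choose_succ_right_eq (t + j + 1) j
      rw [hsub] at h
      rw [mul_comm, ← h, mul_comm]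
    have ht1 : t + 1 + j = t + j + 1 := by omega
    have ht2 : t + (j + 1) = t + j + 1 := by omega
    rw [pascal, ht1, ht2]
    generalize (t + j + 1).choose j = A at *
    generalize (t + j + 1).choose (j + 1) = B at *
    have key2' : A * (t + 1) = B * (j + 1) := by
      rw [mul_comm A, mul_comm B]; exact key2
    calc B * t * (j + 1) + (j + 2) * (A * (t + 1))
        = B * t * (j + 1) + (j + 1) * (A * (t + 1)) + A * (t + 1) := by ring
      _ = B * t * (j + 1) + (j + 1) * (A * (t + 1)) + B * (j + 1) := by rw [key2']
      _ = (A + B) * (t + 1) * (j + 1) := by ring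

/-- For nonnegative integers `t` and `m`, the sum over tuples
`(i_1,...,i_m)` of nonnegative integers with `i_1+···+i_m ≤ t` of
`i_1+···+i_m` equals `C(t+m,m)·t·m/(m+1)`. -/
theorem stmt5 (t m : ℕ) :
    (m + 1) * ∑ x ∈ (Finset.range (t + 1)).biUnion
        (fun s => Finset.Nat.antidiagonalTuple m s), (∑ i, x i)
      = (t + m).choose m * t * m := by
  have hdisj : (↑(Finset.range (t + 1)) : Set ℕ).PairwiseDisjoint
      (fun s => Finset.Nat.antidiagonalTuple m s) := by
    intro a _ b _ hab
    rw [Function.onFun, Finset.disjoint_left]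
    intro x hx1 hx2
    rw [mem_antidiagonalTuple] at hx1 hx2
    exact hab (hx1 ▸ hx2)
  rw [Finset.sum_biUnion hdisj]
  have hinner : ∀ s, (∑ x ∈ Finset.Nat.antidiagonalTuple m s, ∑ i, x i)
      = (Finset.Nat.antidiagonalTuple m s).card * s := by
    intro s
    rw [Finset.sum_congr rfl (fun x hx => mem_antidiagonalTuple.mp hx), Finset.sum_const,
      smul_eq_mul]
  rw [Finset.sum_congr rfl (fun s _ => hinner s)]
  match m with
  | 0 =>
    have hz : ∀ s ∈ Finset.range (t + 1), (Finset.Nat.antidiagonalTuple 0 s).card * s = 0 := by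
      intro s _
      cases s with
      | zero => simp
      | succ s => simp [Finset.Nat.antidiagonalTuple_zero_succ]
    rw [Finset.sum_congr rfl hz]
    simp
  | j + 1 =>
    have hcard : ∀ s ∈ Finset.range (t + 1), (Finset.Nat.antidiagonalTuple (j + 1) s).card * s
        = (s + j).choose j * s := fun s _ => by rw [adt_card]
    rw [Finset.sum_congr rfl hcard]
    exact key_sum j t
end

section
/- Let F be a field, let p(z) ∈ F[z] divide N(z) with deg p ≥ β·deg N, and let g_1,...,g_m ∈ F[z] satisfy p | (f_i - g_i) for all i. Suppose Q(x_1,...,x_m) ∈ F[z][x_1,...,x_m] is an F[z]-linear combination of the polynomials (x_1 - f_1)^{i_1}···(x_m - f_m)^{i_m}·N^ℓ over tuples with i_1 + ··· + i_m + ℓ ≥ k. If deg_z Q(g_1(z),...,g_m(z)) < β·k·deg N, then Q(g_1(z),...,g_m(z)) = 0. -/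
open Polynomial

/-- If `p ∣ N` with `deg p ≥ β·deg N`, `p ∣ (f_i - g_i)` for all
`i`, and `Q` is an `F[z]`-linear combination of
`(x_1-f_1)^{i_1}···(x_m-f_m)^{i_m}·N^ℓ` over tuples with `i_1+···+i_m+ℓ ≥ k`,
then `deg_z Q(g_1,...,g_m) < β·k·deg N` implies `Q(g_1,...,g_m) = 0`. -/
theorem stmt9 (F : Type*) [Field F] (m k : ℕ) (hk : 0 < k) (β : ℚ) (hβ : 0 < β)
    (N p : Polynomial F) (hN : N ≠ 0) (hpN : p ∣ N)
    (hpdeg : β * N.natDegree ≤ (p.natDegree : ℚ))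
    (f g : Fin m → Polynomial F) (hdiv : ∀ i, p ∣ (f i - g i))
    (Q : MvPolynomial (Fin m) (Polynomial F))
    (hQ : Q ∈ Submodule.span (Polynomial F)
      {P : MvPolynomial (Fin m) (Polynomial F) | ∃ (e : Fin m → ℕ) (ℓ : ℕ),
        k ≤ (∑ i, e i) + ℓ ∧
        P = (∏ i, (MvPolynomial.X i - MvPolynomial.C (f i)) ^ e i) *
              MvPolynomial.C N ^ ℓ})
    (hdeg : ((MvPolynomial.eval g Q).natDegree : ℚ) < β * k * N.natDegree) :
    MvPolynomial.eval g Q = 0 := by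
  have hp : p ≠ 0 := by rintro rfl; exact hN (zero_dvd_iff.mp hpN)
  have hdvd : p ^ k ∣ MvPolynomial.eval g Q := by
    refine Submodule.span_induction ?_ ?_ ?_ ?_ hQ
    · rintro P ⟨e, ℓ, hke, rfl⟩
      rw [map_mul, map_pow, MvPolynomial.eval_C, map_prod]
      have step : (∏ i, p ^ e i) * p ^ ℓ ∣
          (∏ i : Fin m, MvPolynomial.eval g ((MvPolynomial.X i - MvPolynomial.C (f i)) ^ e i)) * N ^ ℓ := by
        refine mul_dvd_mul (Finset.prod_dvd_prod_of_dvd _ _ ?_) (pow_dvd_pow_of_dvd hpN ℓ)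
        intro i _
        have : MvPolynomial.eval g ((MvPolynomial.X i - MvPolynomial.C (f i)) ^ e i)
            = (g i - f i) ^ e i := by simp
        rw [this]
        exact pow_dvd_pow_of_dvd (by have := (dvd_neg (α := Polynomial F)).mpr (hdiv i); rwa [neg_sub] at this) _
      refine dvd_trans ?_ step
      rw [Finset.prod_pow_eq_pow_sum, ← pow_add]
      exact pow_dvd_pow _ hke
    · simp
    · intro x y _ _ hx hy; rw [map_add]; exact dvd_add hx hy
    · intro a x _ hx
      rw [MvPolynomial.smul_eq_C_mul, map_mul, MvPolynomial.eval_C]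
      exact Dvd.dvd.mul_left hx a
  by_contra h
  have hle : (p ^ k).natDegree ≤ (MvPolynomial.eval g Q).natDegree :=
    Polynomial.natDegree_le_of_dvd hdvd h
  rw [Polynomial.natDegree_pow] at hle
  have : β * k * N.natDegree ≤ ((k * p.natDegree : ℕ) : ℚ) := by
    push_cast
    calc β * k * N.natDegree = k * (β * N.natDegree) := by ring
    _ ≤ k * p.natDegree := by
        exact mul_le_mul_of_nonneg_left hpdeg (by positivity)
  exact absurd (lt_of_lt_of_le hdeg (this.trans (by exact_mod_cast hle))) (lt_irrefl _)
end
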